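/- There exists n₀ such that for every n ≥ n₀, every injective map x : Fin n → ℝ, and every integer k with 2 ≤ k ≤ 0.9·log n, the number of unordered pairs {u,v} of distinct indices of Fin n that are k-bad is at most n^{−0.005} · n(n−1)/2, i.e., at most an n^{−0.005} fraction of all pairs. (log denotes the natural logarithm.) -/

import Mathlib

/-- A tuple `(t 0, …, t (k-1))` of indices is cycle-reconstructible if any assignment of
positions realising the cyclically consecutive distances realises all pairwise distances. -/
def CycleReconstructible {n k : ℕ} (x : Fin n → ℝ) (t : Fin k → Fin n) : Prop :=
  ∀ w : Fin k → ℝ,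
    (∀ (j : ℕ) (h : j + 1 < k),
      |w ⟨j + 1, h⟩ - w ⟨j, Nat.lt_of_succ_lt h⟩| =
        |x (t ⟨j + 1, h⟩) - x (t ⟨j, Nat.lt_of_succ_lt h⟩)|) →
    (∀ h : 0 < k,
      |w ⟨0, h⟩ - w ⟨k - 1, Nat.sub_lt h Nat.one_pos⟩| =
        |x (t ⟨0, h⟩) - x (t ⟨k - 1, Nat.sub_lt h Nat.one_pos⟩)|) →
    ∀ a b : Fin k, |w a - w b| = |x (t a) - x (t b)|

/-- An ordered `k`-tuple contains both `u` and `v` among its entries. -/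
def ContainsBoth {n k : ℕ} (u v : Fin n) (t : Fin k → Fin n) : Prop :=
  (∃ a, t a = u) ∧ ∃ b, t b = v

/-- A pair `{u, v}` is `k`-bad if more than an `n ^ (-0.005)` fraction of the ordered `k`-tuples
of pairwise distinct indices containing both `u` and `v` are not cycle-reconstructible. -/
def KBad {n : ℕ} (x : Fin n → ℝ) (k : ℕ) (u v : Fin n) : Prop :=
  (n : ℝ) ^ (-(0.005 : ℝ)) *
      ({t : Fin k → Fin n | Function.Injective t ∧ ContainsBoth u v t}.ncard : ℝ)
    < ({t : Fin k → Fin n | Function.Injective t ∧ ContainsBoth u v t ∧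
        ¬ CycleReconstructible x t}.ncard : ℝ)

set_option maxHeartbeats 1000000

attribute [local instance] Classical.propDecidable

noncomputable def Xv {n k : ℕ} (x : Fin n → ℝ) (t : Fin k → Fin n) (j : ℕ) : ℝ :=
  if h : j < k then x (t ⟨j, h⟩) else 0

lemma const_sign {n k : ℕ} (x : Fin n → ℝ) (t : Fin k → Fin n) (w : Fin k → ℝ)
    (σ : ℝ) (hσ : σ = 1 ∨ σ = -1) (hk : 0 < k)
    (h : ∀ (j : ℕ) (hj : j + 1 < k),
      w ⟨j + 1, hj⟩ - w ⟨j, Nat.lt_of_succ_lt hj⟩ =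
        σ * (x (t ⟨j + 1, hj⟩) - x (t ⟨j, Nat.lt_of_succ_lt hj⟩))) :
    ∀ a b : Fin k, |w a - w b| = |x (t a) - x (t b)| := by
  have key : ∀ (m : ℕ) (hm : m < k),
      w ⟨m, hm⟩ - w ⟨0, hk⟩ = σ * (x (t ⟨m, hm⟩) - x (t ⟨0, hk⟩)) := by
    intro m
    induction m with
    | zero => intro hm; simp
    | succ i ih =>
      intro hm
      have hi : i < k := Nat.lt_of_succ_lt hm
      have := h i hm
      have := ih hi
      nlinarith [h i hm, ih hi]
  intro a b
  have ha := key a.val a.isLt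
  have hb := key b.val b.isLt
  simp only [Fin.eta] at ha hb
  have : w a - w b = σ * (x (t a) - x (t b)) := by linarith
  rw [this, abs_mul]
  rcases hσ with h1 | h1 <;> simp [h1]

lemma subset_of_not_rec {n k : ℕ} (x : Fin n → ℝ) (t : Fin k → Fin n)
    (hk : 2 ≤ k) (h : ¬ CycleReconstructible x t) :
    ∃ S : Finset ℕ, S ⊆ Finset.range (k-1) ∧ S.Nonempty ∧
      ∑ j ∈ S, (Xv x t (j+1) - Xv x t j) = 0 := by
  classical
  unfold CycleReconstructible at h
  push_neg at h
  obtain ⟨w, h1, h2, a, b, hab⟩ := h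
  have hk0 : 0 < k := by omega
  set W : ℕ → ℝ := fun j => if h : j < k then w ⟨j, h⟩ else 0 with hW
  -- basic unfolding facts
  have hXv : ∀ (j : ℕ) (hj : j < k), Xv x t j = x (t ⟨j, hj⟩) := by
    intro j hj; simp [Xv, hj]
  have hWv : ∀ (j : ℕ) (hj : j < k), W j = w ⟨j, hj⟩ := by
    intro j hj; simp [hW, hj]
  -- sign for each consecutive pair
  have sign : ∀ j, j + 1 < k →
      (W (j+1) - W j = (Xv x t (j+1) - Xv x t j)) ∨
      (W (j+1) - W j = -(Xv x t (j+1) - Xv x t j)) := by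
    intro j hj
    have := h1 j hj
    rw [hWv (j+1) hj, hWv j (Nat.lt_of_succ_lt hj), hXv (j+1) hj,
      hXv j (Nat.lt_of_succ_lt hj)]
    exact abs_eq_abs.mp this
  -- telescoping
  have telW : ∑ j ∈ Finset.range (k-1), (W (j+1) - W j) = W (k-1) - W 0 :=
    Finset.sum_range_sub W (k-1)
  have telX : ∑ j ∈ Finset.range (k-1), (Xv x t (j+1) - Xv x t j)
      = Xv x t (k-1) - Xv x t 0 := Finset.sum_range_sub (Xv x t) (k-1)
  have hkm : k - 1 < k := Nat.sub_lt hk0 Nat.one_pos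
  have cyc : (W 0 - W (k-1) = Xv x t 0 - Xv x t (k-1)) ∨
      (W 0 - W (k-1) = -(Xv x t 0 - Xv x t (k-1))) := by
    have := h2 hk0
    rw [hWv 0 hk0, hWv (k-1) hkm, hXv 0 hk0, hXv (k-1) hkm]
    exact abs_eq_abs.mp this
  -- the "positive sign" predicate
  set ε : ℕ → Prop := fun j => W (j+1) - W j = (Xv x t (j+1) - Xv x t j) with hε
  rcases cyc with hc | hc
  · -- W(k-1) - W 0 = X(k-1) - X 0 ; take S = negatives
    refine ⟨(Finset.range (k-1)).filter (fun j => ¬ ε j), Finset.filter_subset _ _, ?_, ?_⟩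
    · -- nonempty, else all positive signs
      rw [Finset.filter_nonempty_iff]
      by_contra hno
      push_neg at hno
      have hconst : ∀ (j : ℕ) (hj : j + 1 < k),
          w ⟨j + 1, hj⟩ - w ⟨j, Nat.lt_of_succ_lt hj⟩ =
            (1:ℝ) * (x (t ⟨j + 1, hj⟩) - x (t ⟨j, Nat.lt_of_succ_lt hj⟩)) := by
        intro j hj
        have this2 : W (j+1) - W j = Xv x t (j+1) - Xv x t j :=
          hno j (Finset.mem_range.mpr (by omega))
        rw [hWv (j+1) hj, hWv j (Nat.lt_of_succ_lt hj), hXv (j+1) hj,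
          hXv j (Nat.lt_of_succ_lt hj)] at this2
        linarith
      exact hab (const_sign x t w 1 (Or.inl rfl) hk0 hconst a b)
    · -- sum zero
      have hsplit := Finset.sum_filter_add_sum_filter_not (Finset.range (k-1)) ε
        (fun j => (W (j+1) - W j) - (Xv x t (j+1) - Xv x t j))
      have hzero : ∑ j ∈ Finset.range (k-1),
          ((W (j+1) - W j) - (Xv x t (j+1) - Xv x t j)) = 0 := by
        rw [Finset.sum_sub_distrib, telW, telX]; linarith
      have hpos : ∑ j ∈ (Finset.range (k-1)).filter (fun j => ε j),
          ((W (j+1) - W j) - (Xv x t (j+1) - Xv x t j)) = 0 := by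
        apply Finset.sum_eq_zero
        intro j hj
        rw [Finset.mem_filter] at hj
        have := hj.2
        rw [hε] at this
        linarith [this]
      have hneg : ∑ j ∈ (Finset.range (k-1)).filter (fun j => ¬ ε j),
          ((W (j+1) - W j) - (Xv x t (j+1) - Xv x t j)) =
          ∑ j ∈ (Finset.range (k-1)).filter (fun j => ¬ ε j),
          (-2) * (Xv x t (j+1) - Xv x t j) := by
        apply Finset.sum_congr rfl
        intro j hj
        rw [Finset.mem_filter, Finset.mem_range] at hj
        rcases sign j (by omega) with hs | hs
        · exact absurd hs hj.2
        · rw [hs]; ring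
      have : ∑ j ∈ (Finset.range (k-1)).filter (fun j => ¬ ε j),
          (-2) * (Xv x t (j+1) - Xv x t j) = 0 := by
        rw [← hneg]; linarith [hsplit, hzero, hpos]
      rw [← Finset.mul_sum] at this
      linarith [this]
  · -- W(k-1) - W 0 = -(X(k-1) - X 0) ; take S = positives
    refine ⟨(Finset.range (k-1)).filter (fun j => ε j), Finset.filter_subset _ _, ?_, ?_⟩
    · rw [Finset.filter_nonempty_iff]
      by_contra hno
      push_neg at hno
      have hconst : ∀ (j : ℕ) (hj : j + 1 < k),
          w ⟨j + 1, hj⟩ - w ⟨j, Nat.lt_of_succ_lt hj⟩ =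
            (-1:ℝ) * (x (t ⟨j + 1, hj⟩) - x (t ⟨j, Nat.lt_of_succ_lt hj⟩)) := by
        intro j hj
        have hne := hno j (Finset.mem_range.mpr (by omega))
        rcases sign j hj with hs | hs
        · exact absurd hs hne
        · rw [hWv (j+1) hj, hWv j (Nat.lt_of_succ_lt hj), hXv (j+1) hj,
            hXv j (Nat.lt_of_succ_lt hj)] at hs
          linarith
      exact hab (const_sign x t w (-1) (Or.inr rfl) hk0 hconst a b)
    · have hsplit := Finset.sum_filter_add_sum_filter_not (Finset.range (k-1)) ε
        (fun j => (W (j+1) - W j) + (Xv x t (j+1) - Xv x t j))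
      have hzero : ∑ j ∈ Finset.range (k-1),
          ((W (j+1) - W j) + (Xv x t (j+1) - Xv x t j)) = 0 := by
        rw [Finset.sum_add_distrib, telW, telX]; linarith
      have hneg : ∑ j ∈ (Finset.range (k-1)).filter (fun j => ¬ ε j),
          ((W (j+1) - W j) + (Xv x t (j+1) - Xv x t j)) = 0 := by
        apply Finset.sum_eq_zero
        intro j hj
        rw [Finset.mem_filter, Finset.mem_range] at hj
        rcases sign j (by omega) with hs | hs
        · exact absurd hs hj.2
        · rw [hs]; ring
      have hpos : ∑ j ∈ (Finset.range (k-1)).filter (fun j => ε j),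
          ((W (j+1) - W j) + (Xv x t (j+1) - Xv x t j)) =
          ∑ j ∈ (Finset.range (k-1)).filter (fun j => ε j),
          (2:ℝ) * (Xv x t (j+1) - Xv x t j) := by
        apply Finset.sum_congr rfl
        intro j hj
        rw [Finset.mem_filter] at hj
        have := hj.2
        rw [hε] at this
        rw [this]; ring
      have : ∑ j ∈ (Finset.range (k-1)).filter (fun j => ε j),
          (2:ℝ) * (Xv x t (j+1) - Xv x t j) = 0 := by
        rw [← hpos]; linarith [hsplit, hzero, hneg]
      rw [← Finset.mul_sum] at this
      linarith [this]

open Finset in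
lemma card_AS {n k : ℕ} (x : Fin n → ℝ) (hx : Function.Injective x)
    (S : Finset ℕ) (hS : S ⊆ Finset.range (k-1)) (hne : S.Nonempty) (hk : 2 ≤ k) :
    (Finset.univ.filter (fun t : Fin k → Fin n =>
      ∑ j ∈ S, (Xv x t (j+1) - Xv x t j) = 0)).card ≤ n ^ (k-1) := by
  classical
  set i₀ := S.min' hne with hi₀def
  have hi₀S : i₀ ∈ S := S.min'_mem hne
  have hi₀ : i₀ < k - 1 := Finset.mem_range.mp (hS hi₀S)
  set I0 : Fin k := ⟨i₀, by omega⟩ with hI0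
  -- the value of t at I0 is determined by the rest
  have key : ∀ t : Fin k → Fin n,
      (∑ j ∈ S, (Xv x t (j+1) - Xv x t j) = 0) →
      x (t I0) = ∑ j ∈ S, Xv x t (j+1) - ∑ j ∈ S.erase i₀, Xv x t j := by
    intro t ht
    rw [Finset.sum_sub_distrib] at ht
    have : ∑ j ∈ S, Xv x t j = Xv x t i₀ + ∑ j ∈ S.erase i₀, Xv x t j :=
      (Finset.add_sum_erase S _ hi₀S).symm
    have hXvi : Xv x t i₀ = x (t I0) := by
      have hlt : i₀ < k := by omega
      simp only [Xv, dif_pos hlt]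
      rw [hI0]
    rw [this, hXvi] at ht
    linarith
  have hmaps : ∀ t ∈ Finset.univ.filter (fun t : Fin k → Fin n =>
      ∑ j ∈ S, (Xv x t (j+1) - Xv x t j) = 0),
      (fun i : {i : Fin k // i ≠ I0} => t i.val) ∈
        (Finset.univ : Finset ({i : Fin k // i ≠ I0} → Fin n)) := by
    intro t _; exact Finset.mem_univ _
  have hcard := Finset.card_le_card_of_injOn
    (f := fun (t : Fin k → Fin n) => (fun i : {i : Fin k // i ≠ I0} => t i.val))
    hmaps ?_
  · refine le_trans hcard ?_
    rw [Finset.card_univ, Fintype.card_fun, Fintype.card_fin]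
    have : Fintype.card {i : Fin k // i ≠ I0} = k - 1 := by
      have h1 : Fintype.card {i : Fin k // ¬ (i = I0)} =
          Fintype.card (Fin k) - Fintype.card {i : Fin k // i = I0} :=
        Fintype.card_subtype_compl _
      simp only [Fintype.card_subtype_eq, Fintype.card_fin] at h1
      exact h1
    rw [this]
  · intro t ht t' ht' hρ
    simp only [Finset.coe_filter, Set.mem_setOf_eq, Finset.mem_univ, true_and] at ht ht'
    have heval : ∀ (i : Fin k), i ≠ I0 → t i = t' i := by
      intro i hi
      exact congrFun hρ ⟨i, hi⟩
    have hsum1 : ∑ j ∈ S, Xv x t (j+1) = ∑ j ∈ S, Xv x t' (j+1) := by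
      apply Finset.sum_congr rfl
      intro j hj
      have hjlt : j < k - 1 := Finset.mem_range.mp (hS hj)
      have hjk : j + 1 < k := by omega
      have hii : (⟨j+1, hjk⟩ : Fin k) ≠ I0 := by
        intro hcontra
        have : j + 1 = i₀ := congrArg Fin.val hcontra
        have : i₀ ≤ j := S.min'_le j hj
        omega
      simp only [Xv, dif_pos hjk]
      rw [heval _ hii]
    have hsum2 : ∑ j ∈ S.erase i₀, Xv x t j = ∑ j ∈ S.erase i₀, Xv x t' j := by
      apply Finset.sum_congr rfl
      intro j hj
      have hjS := Finset.mem_of_mem_erase hj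
      have hjne := Finset.ne_of_mem_erase hj
      have hjlt : j < k - 1 := Finset.mem_range.mp (hS hjS)
      have hjk : j < k := by omega
      have hii : (⟨j, hjk⟩ : Fin k) ≠ I0 := by
        intro hcontra
        exact hjne (congrArg Fin.val hcontra)
      simp only [Xv, dif_pos hjk]
      rw [heval _ hii]
    have : x (t I0) = x (t' I0) := by
      rw [key t ht, key t' ht', hsum1, hsum2]
    have hI0eq : t I0 = t' I0 := hx this
    funext i
    by_cases hi : i = I0
    · rw [hi]; exact hI0eq
    · exact heval i hi

open Finset in
lemma card_nonrec {n k : ℕ} (x : Fin n → ℝ) (hx : Function.Injective x) (hk : 2 ≤ k) :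
    (Finset.univ.filter (fun t : Fin k → Fin n => ¬ CycleReconstructible x t)).card
      ≤ 2^(k-1) * n^(k-1) := by
  set P := ((Finset.range (k-1)).powerset.filter (fun S => S.Nonempty)) with hP
  have hsub : Finset.univ.filter (fun t : Fin k → Fin n => ¬ CycleReconstructible x t) ⊆
      P.biUnion (fun S => Finset.univ.filter (fun t : Fin k → Fin n =>
        ∑ j ∈ S, (Xv x t (j+1) - Xv x t j) = 0)) := by
    intro t ht
    rw [Finset.mem_filter] at ht
    obtain ⟨S, hSsub, hSne, hSsum⟩ := subset_of_not_rec x t hk ht.2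
    rw [Finset.mem_biUnion]
    exact ⟨S, Finset.mem_filter.mpr ⟨Finset.mem_powerset.mpr hSsub, hSne⟩,
      Finset.mem_filter.mpr ⟨Finset.mem_univ _, hSsum⟩⟩
  calc (Finset.univ.filter (fun t : Fin k → Fin n => ¬ CycleReconstructible x t)).card
      ≤ (P.biUnion _).card := Finset.card_le_card hsub
    _ ≤ ∑ S ∈ P, (Finset.univ.filter (fun t : Fin k → Fin n =>
        ∑ j ∈ S, (Xv x t (j+1) - Xv x t j) = 0)).card := Finset.card_biUnion_le
    _ ≤ ∑ _S ∈ P, n ^ (k-1) := by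
        apply Finset.sum_le_sum
        intro S hS
        rw [hP, Finset.mem_filter, Finset.mem_powerset] at hS
        exact card_AS x hx S hS.1 hS.2 hk
    _ = P.card * n ^ (k-1) := by rw [Finset.sum_const, smul_eq_mul]
    _ ≤ 2^(k-1) * n^(k-1) := by
        apply Nat.mul_le_mul_right
        calc P.card ≤ (Finset.range (k-1)).powerset.card := Finset.card_filter_le _ _
          _ = 2^(k-1) := by rw [Finset.card_powerset, Finset.card_range]

open Finset in
lemma card_contains_ge {n k : ℕ} (u v : Fin n) (huv : u ≠ v) (hk : 2 ≤ k) :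
    (n-2).descFactorial (k-2) ≤
    (Finset.univ.filter (fun t : Fin k → Fin n =>
      Function.Injective t ∧ ContainsBoth u v t)).card := by
  have hcardγ : Fintype.card {z : Fin n // z ≠ u ∧ z ≠ v} = n - 2 := by
    have h1 : Fintype.card {z : Fin n // ¬ (z = u ∨ z = v)} =
        Fintype.card (Fin n) - Fintype.card {z : Fin n // z = u ∨ z = v} :=
      Fintype.card_subtype_compl _
    have h2 : Fintype.card {z : Fin n // z = u ∨ z = v} = 2 := by
      rw [Fintype.card_subtype]
      have : Finset.univ.filter (fun z : Fin n => z = u ∨ z = v) = {u, v} := by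
        ext z; simp [Finset.mem_insert]
      rw [this, Finset.card_insert_of_notMem (by simp [huv]), Finset.card_singleton]
    have heq : Fintype.card {z : Fin n // z ≠ u ∧ z ≠ v} =
        Fintype.card {z : Fin n // ¬ (z = u ∨ z = v)} := by
      apply Fintype.card_congr
      apply Equiv.subtypeEquivRight
      intro z; push_neg; rfl
    rw [heq, h1, h2, Fintype.card_fin]
  set Φ : (Fin (k-2) ↪ {z : Fin n // z ≠ u ∧ z ≠ v}) → (Fin k → Fin n) := fun e i =>
    if h0 : (i:ℕ) = 0 then u else if h1 : (i:ℕ) = 1 then v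
    else (e ⟨(i:ℕ) - 2, by omega⟩ : {z : Fin n // z ≠ u ∧ z ≠ v}).val with hΦdef
  -- case description of Φ
  have hΦ0 : ∀ e, ∀ i : Fin k, (i:ℕ) = 0 → Φ e i = u := by
    intro e i hi; simp [hΦdef, hi]
  have hΦ1 : ∀ e, ∀ i : Fin k, (i:ℕ) = 1 → Φ e i = v := by
    intro e i hi; simp [hΦdef, hi]
  have hΦ2 : ∀ e, ∀ i : Fin k, ∀ (h2 : 2 ≤ (i:ℕ)),
      Φ e i = (e ⟨(i:ℕ) - 2, by omega⟩).val := by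
    intro e i h2
    rw [hΦdef]
    simp only
    rw [dif_neg (by omega), dif_neg (by omega)]
  have hmem : ∀ e, Φ e ∈ Finset.univ.filter (fun t : Fin k → Fin n =>
      Function.Injective t ∧ ContainsBoth u v t) := by
    intro e
    rw [Finset.mem_filter]
    refine ⟨Finset.mem_univ _, ?_, ?_⟩
    · intro i i' hii
      have hlt : (i:ℕ) < k := i.isLt
      have hlt' : (i':ℕ) < k := i'.isLt
      rcases Nat.lt_or_ge (i:ℕ) 2 with hi2 | hi2 <;>
        rcases Nat.lt_or_ge (i':ℕ) 2 with hi2' | hi2'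
      · interval_cases h : (i:ℕ) <;> interval_cases h' : (i':ℕ)
        · exact Fin.ext (by omega)
        · rw [hΦ0 e i (by omega), hΦ1 e i' (by omega)] at hii
          exact absurd hii huv
        · rw [hΦ1 e i (by omega), hΦ0 e i' (by omega)] at hii
          exact absurd hii.symm huv
        · exact Fin.ext (by omega)
      · rcases Nat.lt_or_ge (i:ℕ) 1 with hi1 | hi1
        · rw [hΦ0 e i (by omega), hΦ2 e i' hi2'] at hii
          exact absurd hii.symm (e ⟨(i':ℕ) - 2, by omega⟩).2.1
        · rw [hΦ1 e i (by omega), hΦ2 e i' hi2'] at hii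
          exact absurd hii.symm (e ⟨(i':ℕ) - 2, by omega⟩).2.2
      · rcases Nat.lt_or_ge (i':ℕ) 1 with hi1 | hi1
        · rw [hΦ0 e i' (by omega), hΦ2 e i hi2] at hii
          exact absurd hii (e ⟨(i:ℕ) - 2, by omega⟩).2.1
        · rw [hΦ1 e i' (by omega), hΦ2 e i hi2] at hii
          exact absurd hii (e ⟨(i:ℕ) - 2, by omega⟩).2.2
      · rw [hΦ2 e i hi2, hΦ2 e i' hi2'] at hii
        have := e.injective (Subtype.ext hii)
        have hval := congrArg Fin.val this
        simp only at hval
        exact Fin.ext (by omega)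
    · exact ⟨⟨⟨0, by omega⟩, hΦ0 e _ rfl⟩, ⟨⟨1, by omega⟩, hΦ1 e _ rfl⟩⟩
  have hinj : Function.Injective Φ := by
    intro e e' hee
    ext j
    have hjlt : (j:ℕ) < k - 2 := j.isLt
    have h1 := congrFun hee ⟨(j:ℕ) + 2, by omega⟩
    rw [hΦ2 e _ (by simp), hΦ2 e' _ (by simp)] at h1
    have hj : (⟨(j:ℕ) + 2 - 2, by omega⟩ : Fin (k-2)) = j := Fin.ext (by simp)
    rw [hj] at h1
    exact congrArg Fin.val h1
  calc (n-2).descFactorial (k-2) = Fintype.card (Fin (k-2) ↪ {z : Fin n // z ≠ u ∧ z ≠ v}) := by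
        rw [Fintype.card_embedding_eq, hcardγ, Fintype.card_fin]
    _ ≤ _ := by
        apply Finset.card_le_card_of_injOn Φ (fun e _ => hmem e)
        exact hinj.injOn

lemma analytic_core (n k : ℕ) (hn : 10^16 ≤ n) (hk2 : 2 ≤ k)
    (hklog : (k:ℝ) ≤ 0.9 * Real.log n) (hkn : k ≤ n)
    (hD : ((n:ℝ) - k) ^ (k-2) ≤ (((n-2).descFactorial (k-2) : ℕ) : ℝ)) :
    ((k:ℝ) * k) * ((2:ℝ)^(k-1) * (n:ℝ)^(k-1)) ≤
      ((n:ℝ) ^ (-(0.005:ℝ)) * ((n:ℝ) * ((n:ℝ) - 1) / 2)) *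
      ((n:ℝ) ^ (-(0.005:ℝ)) * (((n-2).descFactorial (k-2) : ℕ) : ℝ)) := by
  set N : ℝ := (n:ℝ) with hN
  set D : ℝ := (((n-2).descFactorial (k-2) : ℕ) : ℝ) with hDdef
  have hN16 : (10:ℝ)^(16:ℕ) ≤ N := by
    rw [hN]; exact_mod_cast hn
  have hN1 : (1:ℝ) ≤ N := by norm_num at hN16 ⊢; linarith
  have hN0 : (0:ℝ) < N := by linarith
  have hL0 : 0 ≤ Real.log N := Real.log_nonneg hN1
  have hq : (10:ℝ)^(4:ℕ) ≤ N ^ (0.25:ℝ) := by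
    have h1 : ((10:ℝ)^(16:ℕ)) ^ (0.25:ℝ) ≤ N ^ (0.25:ℝ) :=
      Real.rpow_le_rpow (by positivity) hN16 (by norm_num)
    have h2 : ((10:ℝ)^(16:ℕ)) ^ (0.25:ℝ) = (10:ℝ)^(4:ℕ) := by
      rw [← Real.rpow_natCast (10:ℝ) 16, ← Real.rpow_mul (by norm_num),
        ← Real.rpow_natCast (10:ℝ) 4]
      norm_num
    linarith
  have h104 : (10:ℝ)^(4:ℕ) = 10000 := by norm_num
  have hlog : Real.log N ≤ 20 * N ^ (0.05:ℝ) := by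
    have := Real.log_le_rpow_div (le_of_lt hN0) (by norm_num : (0:ℝ) < 0.05)
    calc Real.log N ≤ N ^ (0.05:ℝ) / 0.05 := this
      _ = 20 * N ^ (0.05:ℝ) := by ring
  have hK : (k:ℝ) ≤ 18 * N ^ (0.05:ℝ) := by
    calc (k:ℝ) ≤ 0.9 * Real.log N := hklog
      _ ≤ 0.9 * (20 * N ^ (0.05:ℝ)) := by nlinarith [hlog]
      _ = 18 * N ^ (0.05:ℝ) := by ring
  have hNpos05 : (0:ℝ) ≤ N ^ (0.05:ℝ) := Real.rpow_nonneg (le_of_lt hN0) _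
  have hK2 : (k:ℝ) * k ≤ 324 * N ^ (0.1:ℝ) := by
    have h : N ^ (0.05:ℝ) * N ^ (0.05:ℝ) = N ^ (0.1:ℝ) := by
      rw [← Real.rpow_add hN0]; norm_num
    nlinarith [hK, Nat.cast_nonneg (α := ℝ) k]
  have hmono : ∀ p q : ℝ, p ≤ q → N ^ p ≤ N ^ q := fun p q hpq =>
    Real.rpow_le_rpow_of_exponent_le hN1 hpq
  have h648 : (648:ℝ) ≤ N ^ (0.9:ℝ) := by
    have := hmono 0.25 0.9 (by norm_num)
    nlinarith [hq]
  have hk2N : (k:ℝ) * k ≤ N / 2 := by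
    have h1 : 324 * N ^ (0.1:ℝ) ≤ N / 2 := by
      have hsplit : N ^ (0.1:ℝ) * N ^ (0.9:ℝ) = N := by
        rw [← Real.rpow_add hN0]; norm_num
      have h01 : (0:ℝ) < N ^ (0.1:ℝ) := Real.rpow_pos_of_pos hN0 _
      nlinarith [h648, h01]
    linarith [hK2]
  have hkN : (k:ℝ) ≤ N / 2 := by
    have : (1:ℝ) ≤ k := by exact_mod_cast (by omega : 1 ≤ k)
    nlinarith [hk2N]
  have h2k : (2:ℝ)^(k-1) ≤ N ^ (0.63:ℝ) := by
    have e1 : (2:ℝ)^(k-1) ≤ (2:ℝ)^(k:ℕ) :=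
      pow_le_pow_right₀ (by norm_num) (Nat.sub_le k 1)
    have e2 : (2:ℝ)^(k:ℕ) = (2:ℝ) ^ ((k:ℕ):ℝ) := (Real.rpow_natCast 2 k).symm
    have e3 : (2:ℝ) ^ ((k:ℕ):ℝ) ≤ (2:ℝ) ^ (0.9 * Real.log N) :=
      Real.rpow_le_rpow_of_exponent_le (by norm_num) hklog
    have e4 : (2:ℝ) ^ (0.9 * Real.log N) = Real.exp (0.9 * Real.log N * Real.log 2) := by
      rw [Real.rpow_def_of_pos (by norm_num : (0:ℝ) < 2), mul_comm]
    have e5 : Real.exp (0.9 * Real.log N * Real.log 2) ≤ Real.exp (0.63 * Real.log N) := by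
      apply Real.exp_le_exp.mpr
      nlinarith [Real.log_two_lt_d9, Real.log_nonneg (by norm_num : (1:ℝ) ≤ 2), hL0]
    have e6 : Real.exp (0.63 * Real.log N) = N ^ (0.63:ℝ) := by
      rw [Real.rpow_def_of_pos hN0, mul_comm]
    linarith
  -- Bernoulli lower bound on D
  have hDlow : N ^ (k-2) / 2 ≤ D := by
    have ha : (-2:ℝ) ≤ -((k:ℝ)/N) := by
      have : (k:ℝ)/N ≤ 1 := by
        rw [div_le_one hN0]; linarith [hkN]
      linarith
    have hNk : N - k = N * (1 + -((k:ℝ)/N)) := by field_simp; ring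
    have h1 : N ^ (k-2) * (1 + ((k-2:ℕ):ℝ) * -((k:ℝ)/N)) ≤ (N - k)^(k-2) := by
      rw [hNk, mul_pow]
      exact mul_le_mul_of_nonneg_left (one_add_mul_le_pow ha (k-2))
        (pow_nonneg (le_of_lt hN0) _)
    have hg : (k:ℝ) * ((k:ℝ)/N) ≤ 1/2 := by
      rw [mul_div_assoc', div_le_iff₀ hN0]
      linarith [hk2N]
    have hc : ((k-2:ℕ):ℝ) ≤ (k:ℝ) := by exact_mod_cast Nat.sub_le k 2
    have hgnn : (0:ℝ) ≤ (k:ℝ)/N := by positivity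
    have h2 : (1:ℝ)/2 ≤ 1 + ((k-2:ℕ):ℝ) * -((k:ℝ)/N) := by nlinarith [hg, hc, hgnn]
    have h3 : N ^ (k-2) / 2 ≤ N ^ (k-2) * (1 + ((k-2:ℕ):ℝ) * -((k:ℝ)/N)) := by
      have := mul_le_mul_of_nonneg_left h2 (pow_nonneg (le_of_lt hN0) (k-2))
      linarith
    calc N ^ (k-2)/2 ≤ N ^ (k-2) * (1 + ((k-2:ℕ):ℝ) * -((k:ℝ)/N)) := h3
      _ ≤ (N - k)^(k-2) := h1
      _ ≤ D := hD
  -- rpow algebra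
  have hr1 : N ^ (-(0.005:ℝ)) * N ^ (-(0.005:ℝ)) = N ^ (-(0.01:ℝ)) := by
    rw [← Real.rpow_add hN0]; norm_num
  have hr2 : N ^ (-(0.01:ℝ)) * N = N ^ (0.99:ℝ) := by
    nth_rewrite 2 [← Real.rpow_one N]
    rw [← Real.rpow_add hN0]; norm_num
  have hr3 : N ^ (0.1:ℝ) * N ^ (0.63:ℝ) = N ^ (0.73:ℝ) := by
    rw [← Real.rpow_add hN0]; norm_num
  have hr4 : 2592 * N ^ (0.73:ℝ) ≤ N ^ (0.99:ℝ) := by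
    have hs : N ^ (0.73:ℝ) * N ^ (0.26:ℝ) = N ^ (0.99:ℝ) := by
      rw [← Real.rpow_add hN0]; norm_num
    have h26 : (2592:ℝ) ≤ N ^ (0.26:ℝ) := by
      have := hmono 0.25 0.26 (by norm_num)
      nlinarith [hq]
    have h73 : (0:ℝ) < N ^ (0.73:ℝ) := Real.rpow_pos_of_pos hN0 _
    nlinarith [h26, h73]
  have hpowk1 : (0:ℝ) ≤ N ^ (k-1) := pow_nonneg (le_of_lt hN0) _
  have hpow : N * N ^ (k-2) = N ^ (k-1) := by
    rw [← pow_succ']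
    congr 1
    omega
  have hNhalf : N/2 ≤ N - 1 := by norm_num at hN16; linarith
  -- lower bound for the RHS
  have hRHS : N ^ (0.99:ℝ) * N ^ (k-1) / 8 ≤
      (N ^ (-(0.005:ℝ)) * (N * (N - 1) / 2)) * (N ^ (-(0.005:ℝ)) * D) := by
    have hrw : (N ^ (-(0.005:ℝ)) * (N * (N - 1) / 2)) * (N ^ (-(0.005:ℝ)) * D)
        = N ^ (-(0.01:ℝ)) * ((N * (N - 1) / 2) * D) := by
      rw [← hr1]; ring
    rw [hrw]
    have hrnn : (0:ℝ) < N ^ (-(0.01:ℝ)) := Real.rpow_pos_of_pos hN0 _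
    have hmid : (N * (N/2) / 2) * (N ^ (k-2)/2) ≤ (N * (N - 1) / 2) * D := by
      have hb1 : (0:ℝ) ≤ N * (N/2) / 2 := by positivity
      have hb2 : N * (N/2) / 2 ≤ N * (N-1) / 2 := by nlinarith [hNhalf, hN0]
      have hc1 : (0:ℝ) ≤ N ^ (k-2)/2 := by positivity
      exact mul_le_mul hb2 hDlow hc1 (by nlinarith [hNhalf, hN0])
    have heq : N ^ (-(0.01:ℝ)) * ((N * (N/2) / 2) * (N ^ (k-2)/2))
        = N ^ (0.99:ℝ) * N ^ (k-1) / 8 := by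
      have : N ^ (-(0.01:ℝ)) * ((N * (N/2) / 2) * (N ^ (k-2)/2))
          = (N ^ (-(0.01:ℝ)) * N) * (N * N ^ (k-2)) / 8 := by ring
      rw [this, hr2, hpow]
    rw [← heq]
    exact mul_le_mul_of_nonneg_left hmid (le_of_lt hrnn)
  -- main chain
  calc ((k:ℝ) * k) * ((2:ℝ)^(k-1) * N^(k-1))
      ≤ (324 * N ^ (0.1:ℝ)) * (N ^ (0.63:ℝ) * N^(k-1)) := by
        apply mul_le_mul hK2 (mul_le_mul_of_nonneg_right h2k hpowk1) ?_ ?_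
        · positivity
        · positivity
    _ = 324 * (N ^ (0.1:ℝ) * N ^ (0.63:ℝ)) * N^(k-1) := by ring
    _ = 324 * N ^ (0.73:ℝ) * N^(k-1) := by rw [hr3]
    _ ≤ (N ^ (0.99:ℝ) / 8) * N^(k-1) := by nlinarith [hr4, hpowk1]
    _ = N ^ (0.99:ℝ) * N ^ (k-1) / 8 := by ring
    _ ≤ _ := hRHS

lemma ncard_filter_eq {α : Type*} [Fintype α] (p : α → Prop) [DecidablePred p] :
    {a : α | p a}.ncard = (Finset.univ.filter p).card := by
  rw [Set.ncard_eq_toFinset_card', Set.toFinset_setOf]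

/-- For `2 ≤ k ≤ 0.9 log n`, at most an `n ^ (-0.005)` fraction of all unordered pairs of
distinct indices are `k`-bad. -/

theorem statement8 :
    ∃ n₀ : ℕ, ∀ n : ℕ, n₀ ≤ n → ∀ x : Fin n → ℝ, Function.Injective x →
      ∀ k : ℕ, 2 ≤ k → (k : ℝ) ≤ 0.9 * Real.log n →
      (({e : Sym2 (Fin n) | ∃ u v : Fin n, e = s(u, v) ∧ u ≠ v ∧ KBad x k u v}.ncard : ℝ))
        ≤ (n : ℝ) ^ (-(0.005 : ℝ)) * ((n : ℝ) * ((n : ℝ) - 1) / 2) := by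
  refine ⟨10^16, fun n hn x hx k hk2 hklog => ?_⟩
  have hn2 : 2 ≤ n := le_trans (by norm_num) hn
  have hN0 : (0:ℝ) < n := by positivity
  have hN1 : (1:ℝ) ≤ n := by exact_mod_cast (by omega : 1 ≤ n)
  -- k ≤ n
  have hkn : k ≤ n := by
    have h1 : Real.log n ≤ (n:ℝ) - 1 := Real.log_le_sub_one_of_pos hN0
    have h2 : (k:ℝ) ≤ (n:ℝ) := by nlinarith [hklog]
    exact_mod_cast h2
  set D : ℕ := (n-2).descFactorial (k-2) with hDdef
  have hDpos : 0 < D := by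
    apply Nat.pos_of_ne_zero
    intro h
    rw [hDdef, Nat.descFactorial_eq_zero_iff_lt] at h
    omega
  have hDcast : ((n:ℝ) - k) ^ (k-2) ≤ (D : ℝ) := by
    have h1 : (n-2+1-(k-2))^(k-2) ≤ D := Nat.pow_sub_le_descFactorial (n-2) (k-2)
    have h2 : n-2+1-(k-2) = n-k+1 := by omega
    rw [h2] at h1
    have h3 : ((n-k+1 : ℕ) : ℝ) = (n:ℝ) - k + 1 := by
      push_cast [Nat.cast_sub hkn]; ring
    have h4 : ((n:ℝ) - k) ^ (k-2) ≤ ((n:ℝ) - k + 1) ^ (k-2) := by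
      apply pow_le_pow_left₀ ?_ (by linarith) _
      have : (k:ℝ) ≤ n := by exact_mod_cast hkn
      linarith
    calc ((n:ℝ) - k) ^ (k-2) ≤ ((n:ℝ) - k + 1) ^ (k-2) := h4
      _ = ((n-k+1 : ℕ) : ℝ) ^ (k-2) := by rw [h3]
      _ ≤ (D:ℝ) := by exact_mod_cast h1
  set Bd : Finset (Sym2 (Fin n)) := Finset.univ.filter
    (fun e : Sym2 (Fin n) => ∃ u v : Fin n, e = s(u, v) ∧ u ≠ v ∧ KBad x k u v) with hBd
  have hgoalcast :
      ({e : Sym2 (Fin n) | ∃ u v : Fin n, e = s(u, v) ∧ u ≠ v ∧ KBad x k u v}.ncard : ℝ)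
        = (Bd.card : ℝ) := by
    rw [ncard_filter_eq, hBd]
  rw [hgoalcast]
  -- the per-tuple counting function
  set Me : Sym2 (Fin n) → ℕ := fun e => (Finset.univ.filter
    (fun t : Fin k → Fin n => Function.Injective t ∧ (∀ z ∈ e, ∃ a, t a = z) ∧
      ¬ CycleReconstructible x t)).card with hMe
  have step1 : ∀ e ∈ Bd, (n:ℝ) ^ (-(0.005:ℝ)) * (D:ℝ) ≤ (Me e : ℝ) := by
    intro e he
    rw [hBd, Finset.mem_filter] at he
    obtain ⟨-, u, v, rfl, huv, hbad⟩ := he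
    have hCB : ∀ t : Fin k → Fin n, (∀ z ∈ s(u,v), ∃ a, t a = z) ↔ ContainsBoth u v t := by
      intro t
      simp [Sym2.mem_iff, ContainsBoth, forall_eq_or_imp]
    have hMeq : Me s(u,v) = (Finset.univ.filter (fun t : Fin k → Fin n =>
        Function.Injective t ∧ ContainsBoth u v t ∧ ¬ CycleReconstructible x t)).card := by
      show (Finset.univ.filter
        (fun t : Fin k → Fin n => Function.Injective t ∧ (∀ z ∈ s(u,v), ∃ a, t a = z) ∧
          ¬ CycleReconstructible x t)).card = _
      congr 1
      apply Finset.filter_congr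
      intro t _
      rw [hCB t]
    rw [hMeq]
    rw [KBad] at hbad
    rw [ncard_filter_eq, ncard_filter_eq] at hbad
    have hNcontain := card_contains_ge u v huv hk2
    have hrnn : (0:ℝ) ≤ (n:ℝ) ^ (-(0.005:ℝ)) := Real.rpow_nonneg (le_of_lt hN0) _
    have : (n:ℝ) ^ (-(0.005:ℝ)) * (D:ℝ) ≤ (n:ℝ) ^ (-(0.005:ℝ)) *
        ((Finset.univ.filter (fun t : Fin k → Fin n =>
          Function.Injective t ∧ ContainsBoth u v t)).card : ℝ) := by
      apply mul_le_mul_of_nonneg_left ?_ hrnn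
      exact_mod_cast hNcontain
    linarith [hbad]
  have step2 : ∑ e ∈ Bd, Me e ≤ k * k * (2^(k-1) * n^(k-1)) := by
    set NRf : Finset (Fin k → Fin n) :=
      Finset.univ.filter (fun t => ¬ CycleReconstructible x t) with hNRf
    have h1 : ∀ e, Me e ≤ (NRf.filter (fun t => ∀ z ∈ e, ∃ a, t a = z)).card := by
      intro e
      apply Finset.card_le_card
      intro t ht
      simp only [hMe, hNRf, Finset.mem_filter, Finset.mem_univ, true_and] at ht ⊢
      tauto
    calc ∑ e ∈ Bd, Me e
        ≤ ∑ e ∈ Bd, (NRf.filter (fun t => ∀ z ∈ e, ∃ a, t a = z)).card :=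
          Finset.sum_le_sum (fun e _ => h1 e)
      _ = ∑ e ∈ Bd, ∑ t ∈ NRf, (if (∀ z ∈ e, ∃ a, t a = z) then 1 else 0) := by
          apply Finset.sum_congr rfl
          intro e _
          exact Finset.card_filter _ _
      _ = ∑ t ∈ NRf, ∑ e ∈ Bd, (if (∀ z ∈ e, ∃ a, t a = z) then 1 else 0) :=
          Finset.sum_comm
      _ = ∑ t ∈ NRf, (Bd.filter (fun e => ∀ z ∈ e, ∃ a, t a = z)).card := by
          apply Finset.sum_congr rfl
          intro t _
          exact (Finset.card_filter _ _).symm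
      _ ≤ ∑ _t ∈ NRf, k * k := by
          apply Finset.sum_le_sum
          intro t _
          -- the pairs contained in t are an image of Fin k × Fin k
          have hsub : Bd.filter (fun e => ∀ z ∈ e, ∃ a, t a = z) ⊆
              (Finset.univ : Finset (Fin k × Fin k)).image
                (fun p => s(t p.1, t p.2)) := by
            intro e he
            rw [Finset.mem_filter] at he
            induction e with
            | _ z1 z2 =>
              obtain ⟨a, ha⟩ := he.2 z1 (by rw [Sym2.mem_iff]; left; rfl)
              obtain ⟨b, hb⟩ := he.2 z2 (by rw [Sym2.mem_iff]; right; rfl)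
              rw [Finset.mem_image]
              exact ⟨(a, b), Finset.mem_univ _, by rw [ha, hb]⟩
          calc (Bd.filter (fun e => ∀ z ∈ e, ∃ a, t a = z)).card
              ≤ ((Finset.univ : Finset (Fin k × Fin k)).image
                  (fun p => s(t p.1, t p.2))).card := Finset.card_le_card hsub
            _ ≤ (Finset.univ : Finset (Fin k × Fin k)).card := Finset.card_image_le
            _ = k * k := by rw [Finset.card_univ, Fintype.card_prod, Fintype.card_fin]
      _ = NRf.card * (k * k) := by rw [Finset.sum_const, smul_eq_mul]
      _ ≤ (2^(k-1) * n^(k-1)) * (k * k) :=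
          Nat.mul_le_mul_right _ (card_nonrec x hx hk2)
      _ = k * k * (2^(k-1) * n^(k-1)) := by ring
  -- combine
  have step3 : (Bd.card : ℝ) * ((n:ℝ) ^ (-(0.005:ℝ)) * (D:ℝ)) ≤
      ((k:ℝ) * k) * ((2:ℝ)^(k-1) * (n:ℝ)^(k-1)) := by
    have h1 := Finset.card_nsmul_le_sum Bd (fun e => (Me e : ℝ))
      ((n:ℝ) ^ (-(0.005:ℝ)) * (D:ℝ)) step1
    rw [nsmul_eq_mul] at h1
    have h2 : ∑ e ∈ Bd, (Me e : ℝ) ≤ ((k * k * (2^(k-1) * n^(k-1)) : ℕ) : ℝ) := by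
      rw [← Nat.cast_sum]
      exact_mod_cast step2
    have h3 : ((k * k * (2^(k-1) * n^(k-1)) : ℕ) : ℝ) =
        ((k:ℝ) * k) * ((2:ℝ)^(k-1) * (n:ℝ)^(k-1)) := by push_cast; ring
    linarith
  have hfinal := analytic_core n k hn hk2 hklog hkn hDcast
  have hcD : (0:ℝ) < (n:ℝ) ^ (-(0.005:ℝ)) * (D:ℝ) := by
    apply mul_pos (Real.rpow_pos_of_pos hN0 _)
    exact_mod_cast hDpos
  have := le_trans step3 hfinal
  exact le_of_mul_le_mul_right (by linarith [this]) hcD
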